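/- Let φ(z) = 1/(1+e^{−z}) (the sigmoid). The pair of equations (u² − 1)/2 = ∫_1^v 1/(1 − φ(z)) dz and u·φ(v) = 1/2 (corresponding to width k = 2 and initialization u₀ = v₀ = 1) has a solution (u, v) with u > 0, v > 0, and the quantity φ'(v)v/φ(v) at this solution is strictly less than 1. -/

import Mathlib

lemma integrand_eq (z : ℝ) : 1 / (1 - 1 / (1 + Real.exp (-z))) = 1 + Real.exp z := by
  have h1 : (0:ℝ) < 1 + Real.exp (-z) := by positivity
  have h2 : Real.exp (-z) = (Real.exp z)⁻¹ := Real.exp_neg z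
  have h3 : (0:ℝ) < Real.exp z := Real.exp_pos z
  rw [h2]
  field_simp
  ring

lemma integral_eq (v : ℝ) :
    (∫ z in (1 : ℝ)..v, 1 / (1 - 1 / (1 + Real.exp (-z)))) =
      (v - 1) + (Real.exp v - Real.exp 1) := by
  have : (∫ z in (1 : ℝ)..v, 1 / (1 - 1 / (1 + Real.exp (-z)))) =
      ∫ z in (1 : ℝ)..v, (1 + Real.exp z) := by
    apply intervalIntegral.integral_congr
    intro z _
    exact integrand_eq z
  rw [this, intervalIntegral.integral_add intervalIntegrable_const
      (Real.continuous_exp.intervalIntegrable 1 v)]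
  simp [integral_exp]

theorem sigmoid_autoencoder_solution_is_attractor :
    ∃ u v : ℝ, 0 < u ∧ 0 < v ∧
      (u ^ 2 - 1) / 2 = (∫ z in (1 : ℝ)..v, 1 / (1 - 1 / (1 + Real.exp (-z)))) ∧
      u * (1 / (1 + Real.exp (-v))) = 1 / 2 ∧
      deriv (fun z => 1 / (1 + Real.exp (-z))) v * v / (1 / (1 + Real.exp (-v))) < 1 := by
  set f : ℝ → ℝ := fun v =>
    ((((1 + Real.exp (-v)) / 2) ^ 2 - 1) / 2) - ((v - 1) + (Real.exp v - Real.exp 1)) with hf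
  have hcont : ContinuousOn f (Set.Icc 0 1) := by
    apply Continuous.continuousOn
    fun_prop
  have hf0 : f 0 = Real.exp 1 := by
    simp [hf]
  have hf1 : f 1 < 0 := by
    have h1 : Real.exp (-1 : ℝ) < 1 := by rw [Real.exp_lt_one_iff]; norm_num
    have h2 : (0:ℝ) < Real.exp (-1 : ℝ) := Real.exp_pos _
    simp only [hf]
    nlinarith
  have h0pos : (0:ℝ) < f 0 := by rw [hf0]; exact Real.exp_pos 1
  have key : (0:ℝ) ∈ Set.Ioo (f 1) (f 0) := ⟨hf1, h0pos⟩
  have := intermediate_value_Ioo' (by norm_num : (0:ℝ) ≤ 1) hcont key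
  obtain ⟨v, hv, hfv⟩ := this
  obtain ⟨hv0, hv1⟩ := hv
  refine ⟨(1 + Real.exp (-v)) / 2, v, by positivity, hv0, ?_, ?_, ?_⟩
  · rw [integral_eq]
    have : f v = 0 := hfv
    simp only [hf] at this
    linarith
  · have h1 : (0:ℝ) < 1 + Real.exp (-v) := by positivity
    field_simp
  · have h1 : (0:ℝ) < 1 + Real.exp (-v) := by positivity
    have h3 : (0:ℝ) < Real.exp (-v) := Real.exp_pos _
    have hderiv : deriv (fun z => 1 / (1 + Real.exp (-z))) v =
        Real.exp (-v) / (1 + Real.exp (-v)) ^ 2 := by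
      have hinner : HasDerivAt (fun z : ℝ => 1 + Real.exp (-z)) (-Real.exp (-v)) v := by
        have : HasDerivAt (fun z : ℝ => Real.exp (-z)) (Real.exp (-v) * (-1)) v :=
          (Real.hasDerivAt_exp (-v)).comp v ((hasDerivAt_id v).neg)
        simpa using this.const_add 1
      have hne : (1 + Real.exp (-v)) ≠ 0 := ne_of_gt h1
      have := hinner.inv hne
      simp only [one_div]
      rw [show (fun z : ℝ => (1 + Real.exp (-z))⁻¹) = (fun z : ℝ => 1 + Real.exp (-z))⁻¹ from rfl, this.deriv]
      field_simp
    rw [hderiv]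
    have heq : Real.exp (-v) / (1 + Real.exp (-v)) ^ 2 * v / (1 / (1 + Real.exp (-v))) =
        v * (Real.exp (-v) / (1 + Real.exp (-v))) := by
      field_simp
    rw [heq]
    have hfrac : Real.exp (-v) / (1 + Real.exp (-v)) < 1 := by
      rw [div_lt_one h1]; linarith
    calc v * (Real.exp (-v) / (1 + Real.exp (-v))) < v * 1 := by
          exact mul_lt_mul_of_pos_left hfrac hv0
      _ = v := by ring
      _ < 1 := hv1
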